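/- For the positivity-check machine the following holds for all m, m′ ∈ ℤ. (i) ((m, 0, 0, 0), s) ↝ ((m′, 0, 0, 0), s) if and only if m = m′. (ii) ((m, 0, 0, 0), f) ↝ ((m′, 0, 0, 0), f) if and only if m = m′. (iii) ((m, 0, 0, 0), s) ↝ ((m′, 0, 0, 0), f) if and only if m = m′ and m ≥ 1. In particular, the machine checks positivity: starting from (m, 0, 0, 0) in state s, the state f can be reached with all auxiliary coordinates reset to 0 exactly when m ≥ 1, and then only with the first coordinate unchanged. -/

import Mathlib

namespace PosCheckMachine

/-- The eight states of the positivity-check machine. -/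
inductive St | s | q₁ | c₁ | c₂ | q₂ | d₁ | d₂ | f

/-- Configurations of the positivity-check machine. -/
abbrev Cfg := (ℤ × ℤ × ℤ × ℤ) × St

/-- The basic steps of the positivity-check machine. -/
def Step0 (P Q : Cfg) : Prop :=
  (∃ a b c d : ℤ, b = 0 ∧ P = ((a, b, c, d), St.s) ∧ Q = ((a, b, c, d), St.q₁)) ∨
  (∃ a b c d : ℤ, b = 0 ∧ c = 0 ∧ P = ((a, b, c, d), St.q₁) ∧ Q = ((a, b, c, d), St.c₁)) ∨
  (∃ a b c d : ℤ, P = ((a, b, c, d), St.c₁) ∧ Q = ((a - 1, b, c + 1, d), St.c₁)) ∨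
  (∃ a b c d : ℤ, a = 0 ∧ b = 0 ∧ P = ((a, b, c, d), St.c₁) ∧ Q = ((a, b, c, d), St.c₂)) ∨
  (∃ a b c d : ℤ, P = ((a, b, c, d), St.c₂) ∧ Q = ((a + 1, b + 1, c - 1, d), St.c₂)) ∨
  (∃ a b c d : ℤ, c = 0 ∧ P = ((a, b, c, d), St.c₂) ∧ Q = ((a, b, c, d), St.q₂)) ∨
  (∃ a b c d : ℤ, d = 0 ∧ P = ((a, b, c, d), St.q₂) ∧ Q = ((a, b, c, d), St.d₁)) ∨
  (∃ a b c d : ℤ, P = ((a, b, c, d), St.d₁) ∧ Q = ((a, b - 2, c, d + 1), St.d₁)) ∨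
  (∃ a b c d : ℤ, b = 0 ∧ P = ((a, b, c, d), St.d₁) ∧ Q = ((a, b, c, d), St.d₂)) ∨
  (∃ a b c d : ℤ, b = -1 ∧ P = ((a, b, c, d), St.d₁) ∧ Q = ((a, b + 1, c, d), St.d₂)) ∨
  (∃ a b c d : ℤ, P = ((a, b, c, d), St.d₂) ∧ Q = ((a, b + 1, c, d - 1), St.d₂)) ∨
  (∃ a b c d : ℤ, d = 0 ∧ P = ((a, b, c, d), St.d₂) ∧ Q = ((a, b, c, d), St.q₂)) ∨
  (∃ a b c d : ℤ, b = 1 ∧ P = ((a, b, c, d), St.q₂) ∧ Q = ((a, b - 1, c, d), St.f))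

/-- The one-step relation: the symmetric closure of the basic steps. -/
def Step (P Q : Cfg) : Prop := Step0 P Q ∨ Step0 Q P

/-- The reachability relation of the positivity-check machine. -/
def Reach : Cfg → Cfg → Prop := Relation.ReflTransGen Step

/-! ### Invariants -/

/-- The reachability class of `((m,0,0,0), s)`. -/
def InS (m : ℤ) : Cfg → Prop
  | ((a, b, c, d), St.s) => a = m ∧ b = 0 ∧ c = 0 ∧ d = 0
  | ((a, b, c, d), St.q₁) => a = m ∧ b = 0 ∧ c = 0 ∧ d = 0
  | ((a, b, c, d), St.c₁) => a + c = m ∧ b = 0 ∧ d = 0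
  | ((a, b, c, d), St.c₂) => a + c = m ∧ (1 ≤ b - a + m ↔ 1 ≤ m) ∧ d = 0
  | ((a, b, c, d), St.q₂) => a = m ∧ (1 ≤ b ↔ 1 ≤ m) ∧ c = 0 ∧ d = 0
  | ((a, b, c, d), St.d₁) => a = m ∧ (1 ≤ b + 2 * d ↔ 1 ≤ m) ∧ c = 0
  | ((a, b, c, d), St.d₂) => a = m ∧ (1 ≤ b + d ↔ 1 ≤ m) ∧ c = 0
  | ((a, b, c, d), St.f) => a = m ∧ b = 0 ∧ c = 0 ∧ d = 0 ∧ 1 ≤ m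

/-- A class containing `((m,0,0,0), f)` (and no other `f`- or `s`-configuration).
For `m ≤ 0` this is the actual reachability class of `((m,0,0,0), f)`. -/
def InF (m : ℤ) : Cfg → Prop
  | ((a, b, c, d), St.s) => a = m ∧ b = 0 ∧ c = 0 ∧ d = 0 ∧ 1 ≤ m
  | ((a, b, c, d), St.q₁) => a = m ∧ b = 0 ∧ c = 0 ∧ d = 0 ∧ 1 ≤ m
  | ((a, b, c, d), St.c₁) => a + c = m ∧ b = 0 ∧ d = 0 ∧ 1 ≤ m
  | ((a, b, c, d), St.c₂) => a + c = m ∧ 1 ≤ b - a + m ∧ d = 0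
  | ((a, b, c, d), St.q₂) => a = m ∧ 1 ≤ b ∧ c = 0 ∧ d = 0
  | ((a, b, c, d), St.d₁) => a = m ∧ 1 ≤ b + 2 * d ∧ c = 0
  | ((a, b, c, d), St.d₂) => a = m ∧ 1 ≤ b + d ∧ c = 0
  | ((a, b, c, d), St.f) => a = m ∧ b = 0 ∧ c = 0 ∧ d = 0

lemma inS_step0_iff (m : ℤ) {P Q : Cfg} (h : Step0 P Q) : InS m P ↔ InS m Q := by
  rcases h with ⟨a,b,c,d,hb,hP,hQ⟩ | ⟨a,b,c,d,hb,hc,hP,hQ⟩ | ⟨a,b,c,d,hP,hQ⟩ |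
    ⟨a,b,c,d,ha,hb,hP,hQ⟩ | ⟨a,b,c,d,hP,hQ⟩ | ⟨a,b,c,d,hc,hP,hQ⟩ | ⟨a,b,c,d,hd,hP,hQ⟩ |
    ⟨a,b,c,d,hP,hQ⟩ | ⟨a,b,c,d,hb,hP,hQ⟩ | ⟨a,b,c,d,hb,hP,hQ⟩ | ⟨a,b,c,d,hP,hQ⟩ |
    ⟨a,b,c,d,hd,hP,hQ⟩ | ⟨a,b,c,d,hb,hP,hQ⟩ <;>
  subst hP hQ <;> simp only [InS] <;> omega

lemma inF_step0_iff (m : ℤ) {P Q : Cfg} (h : Step0 P Q) : InF m P ↔ InF m Q := by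
  rcases h with ⟨a,b,c,d,hb,hP,hQ⟩ | ⟨a,b,c,d,hb,hc,hP,hQ⟩ | ⟨a,b,c,d,hP,hQ⟩ |
    ⟨a,b,c,d,ha,hb,hP,hQ⟩ | ⟨a,b,c,d,hP,hQ⟩ | ⟨a,b,c,d,hc,hP,hQ⟩ | ⟨a,b,c,d,hd,hP,hQ⟩ |
    ⟨a,b,c,d,hP,hQ⟩ | ⟨a,b,c,d,hb,hP,hQ⟩ | ⟨a,b,c,d,hb,hP,hQ⟩ | ⟨a,b,c,d,hP,hQ⟩ |
    ⟨a,b,c,d,hd,hP,hQ⟩ | ⟨a,b,c,d,hb,hP,hQ⟩ <;>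
  subst hP hQ <;> simp only [InF] <;> omega

lemma inS_reach (m : ℤ) {P Q : Cfg} (h : Reach P Q) (hP : InS m P) : InS m Q := by
  induction h with
  | refl => exact hP
  | tail _ hstep ih =>
      rcases hstep with h0 | h0
      · exact (inS_step0_iff m h0).mp ih
      · exact (inS_step0_iff m h0).mpr ih

lemma inF_reach (m : ℤ) {P Q : Cfg} (h : Reach P Q) (hP : InF m P) : InF m Q := by
  induction h with
  | refl => exact hP
  | tail _ hstep ih =>
      rcases hstep with h0 | h0
      · exact (inF_step0_iff m h0).mp ih
      · exact (inF_step0_iff m h0).mpr ih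

/-! ### Path construction -/

lemma single {P Q : Cfg} (h : Step0 P Q) : Reach P Q :=
  Relation.ReflTransGen.single (Or.inl h)

lemma c1_loopN (a b c d : ℤ) : ∀ n : ℕ,
    Reach ((a, b, c, d), St.c₁) ((a - n, b, c + n, d), St.c₁)
  | 0 => by simp only [Nat.cast_zero, sub_zero, add_zero, mul_zero]; exact Relation.ReflTransGen.refl
  | (n + 1) => by
      refine (c1_loopN a b c d n).tail
        (Or.inl (Or.inr (Or.inr (Or.inl ⟨a - n, b, c + n, d, rfl, ?_⟩))))
      simp only [Prod.mk.injEq, eq_self_iff_true, and_true, true_and]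
      push_cast
      omega

lemma c1_loop (a b c d : ℤ) {k : ℤ} (hk : 0 ≤ k) :
    Reach ((a, b, c, d), St.c₁) ((a - k, b, c + k, d), St.c₁) := by
  have := c1_loopN a b c d k.toNat
  rwa [Int.toNat_of_nonneg hk] at this

lemma c2_loopN (a b c d : ℤ) : ∀ n : ℕ,
    Reach ((a, b, c, d), St.c₂) ((a + n, b + n, c - n, d), St.c₂)
  | 0 => by simp only [Nat.cast_zero, sub_zero, add_zero, mul_zero]; exact Relation.ReflTransGen.refl
  | (n + 1) => by
      refine (c2_loopN a b c d n).tail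
        (Or.inl (Or.inr (Or.inr (Or.inr (Or.inr (Or.inl ⟨a + n, b + n, c - n, d, rfl, ?_⟩))))))
      simp only [Prod.mk.injEq, eq_self_iff_true, and_true, true_and]
      push_cast
      omega

lemma c2_loop (a b c d : ℤ) {k : ℤ} (hk : 0 ≤ k) :
    Reach ((a, b, c, d), St.c₂) ((a + k, b + k, c - k, d), St.c₂) := by
  have := c2_loopN a b c d k.toNat
  rwa [Int.toNat_of_nonneg hk] at this

lemma d1_loopN (a b c d : ℤ) : ∀ n : ℕ,
    Reach ((a, b, c, d), St.d₁) ((a, b - 2 * n, c, d + n), St.d₁)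
  | 0 => by simp only [Nat.cast_zero, sub_zero, add_zero, mul_zero]; exact Relation.ReflTransGen.refl
  | (n + 1) => by
      refine (d1_loopN a b c d n).tail
        (Or.inl (Or.inr (Or.inr (Or.inr (Or.inr (Or.inr (Or.inr (Or.inr (Or.inl
          ⟨a, b - 2 * n, c, d + n, rfl, ?_⟩)))))))))
      simp only [Prod.mk.injEq, eq_self_iff_true, and_true, true_and]
      push_cast
      omega

lemma d1_loop (a b c d : ℤ) {k : ℤ} (hk : 0 ≤ k) :
    Reach ((a, b, c, d), St.d₁) ((a, b - 2 * k, c, d + k), St.d₁) := by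
  have := d1_loopN a b c d k.toNat
  rwa [Int.toNat_of_nonneg hk] at this

lemma d2_loopN (a b c d : ℤ) : ∀ n : ℕ,
    Reach ((a, b, c, d), St.d₂) ((a, b + n, c, d - n), St.d₂)
  | 0 => by simp only [Nat.cast_zero, sub_zero, add_zero, mul_zero]; exact Relation.ReflTransGen.refl
  | (n + 1) => by
      refine (d2_loopN a b c d n).tail
        (Or.inl (Or.inr (Or.inr (Or.inr (Or.inr (Or.inr (Or.inr (Or.inr (Or.inr (Or.inr
          (Or.inr (Or.inl ⟨a, b + n, c, d - n, rfl, ?_⟩))))))))))))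
      simp only [Prod.mk.injEq, eq_self_iff_true, and_true, true_and]
      push_cast
      omega

lemma d2_loop (a b c d : ℤ) {k : ℤ} (hk : 0 ≤ k) :
    Reach ((a, b, c, d), St.d₂) ((a, b + k, c, d - k), St.d₂) := by
  have := d2_loopN a b c d k.toNat
  rwa [Int.toNat_of_nonneg hk] at this

/-- One halving round in the `q₂`-`d₁`-`d₂` loop. -/
lemma q2_desc (m b : ℤ) (hb : 2 ≤ b) :
    ∃ b', 1 ≤ b' ∧ b' < b ∧
      Reach ((m, b, 0, 0), St.q₂) ((m, b', 0, 0), St.q₂) := by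
  rcases Int.even_or_odd b with ⟨k, hk⟩ | ⟨k, hk⟩
  · -- b = k + k, even
    refine ⟨k, by omega, by omega, ?_⟩
    have h1 : Reach ((m, b, 0, 0), St.q₂) ((m, b, 0, 0), St.d₁) :=
      single (Or.inr (Or.inr (Or.inr (Or.inr (Or.inr (Or.inr (Or.inl
        ⟨m, b, 0, 0, rfl, rfl, rfl⟩)))))))
    have h2 : Reach ((m, b, 0, 0), St.d₁) ((m, 0, 0, k), St.d₁) := by
      have := d1_loop m b 0 0 (k := k) (by omega)
      rw [show b - 2 * k = 0 by omega, show (0 : ℤ) + k = k by ring] at this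
      exact this
    have h3 : Reach ((m, 0, 0, k), St.d₁) ((m, 0, 0, k), St.d₂) :=
      single (Or.inr (Or.inr (Or.inr (Or.inr (Or.inr (Or.inr (Or.inr (Or.inr (Or.inl
        ⟨m, 0, 0, k, rfl, rfl, rfl⟩)))))))))
    have h4 : Reach ((m, 0, 0, k), St.d₂) ((m, k, 0, 0), St.d₂) := by
      have := d2_loop m 0 0 k (k := k) (by omega)
      rw [show (0 : ℤ) + k = k by ring, show k - k = (0 : ℤ) by ring] at this
      exact this
    have h5 : Reach ((m, k, 0, 0), St.d₂) ((m, k, 0, 0), St.q₂) :=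
      single (Or.inr (Or.inr (Or.inr (Or.inr (Or.inr (Or.inr (Or.inr (Or.inr (Or.inr (Or.inr
        (Or.inr (Or.inl ⟨m, k, 0, 0, rfl, rfl, rfl⟩))))))))))))
    exact (((h1.trans h2).trans h3).trans h4).trans h5
  · -- b = 2k + 1, odd
    refine ⟨k + 1, by omega, by omega, ?_⟩
    have h1 : Reach ((m, b, 0, 0), St.q₂) ((m, b, 0, 0), St.d₁) :=
      single (Or.inr (Or.inr (Or.inr (Or.inr (Or.inr (Or.inr (Or.inl
        ⟨m, b, 0, 0, rfl, rfl, rfl⟩)))))))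
    have h2 : Reach ((m, b, 0, 0), St.d₁) ((m, -1, 0, k + 1), St.d₁) := by
      have := d1_loop m b 0 0 (k := k + 1) (by omega)
      rw [show b - 2 * (k + 1) = -1 by omega, show (0 : ℤ) + (k + 1) = k + 1 by ring] at this
      exact this
    have h3 : Reach ((m, -1, 0, k + 1), St.d₁) ((m, 0, 0, k + 1), St.d₂) := by
      refine single (Or.inr (Or.inr (Or.inr (Or.inr (Or.inr (Or.inr (Or.inr (Or.inr (Or.inr
        (Or.inl ⟨m, -1, 0, k + 1, rfl, rfl, ?_⟩))))))))))
      simp only [Prod.mk.injEq, eq_self_iff_true, and_true, true_and]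
      omega
    have h4 : Reach ((m, 0, 0, k + 1), St.d₂) ((m, k + 1, 0, 0), St.d₂) := by
      have := d2_loop m 0 0 (k + 1) (k := k + 1) (by omega)
      rw [show (0 : ℤ) + (k + 1) = k + 1 by ring, show k + 1 - (k + 1) = (0 : ℤ) by ring] at this
      exact this
    have h5 : Reach ((m, k + 1, 0, 0), St.d₂) ((m, k + 1, 0, 0), St.q₂) :=
      single (Or.inr (Or.inr (Or.inr (Or.inr (Or.inr (Or.inr (Or.inr (Or.inr (Or.inr (Or.inr
        (Or.inr (Or.inl ⟨m, k + 1, 0, 0, rfl, rfl, rfl⟩))))))))))))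
    exact (((h1.trans h2).trans h3).trans h4).trans h5

lemma q2_to_one_aux (m : ℤ) : ∀ n : ℕ, ∀ b : ℤ, 1 ≤ b → b ≤ (n : ℤ) →
    Reach ((m, b, 0, 0), St.q₂) ((m, 1, 0, 0), St.q₂) := by
  intro n
  induction n with
  | zero => intro b h1 h2; omega
  | succ n ih =>
      intro b h1 h2
      rcases eq_or_lt_of_le h1 with h | h
      · rw [← h]; exact Relation.ReflTransGen.refl
      · obtain ⟨b', h1', hlt, hr⟩ := q2_desc m b (by omega)
        exact hr.trans (ih b' h1' (by omega))

lemma q2_to_one (m b : ℤ) (hb : 1 ≤ b) :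
    Reach ((m, b, 0, 0), St.q₂) ((m, 1, 0, 0), St.q₂) :=
  q2_to_one_aux m b.toNat b hb (by omega)

lemma path_pos (m : ℤ) (hm : 1 ≤ m) :
    Reach ((m, 0, 0, 0), St.s) ((m, 0, 0, 0), St.f) := by
  have h1 : Reach ((m, 0, 0, 0), St.s) ((m, 0, 0, 0), St.q₁) :=
    single (Or.inl ⟨m, 0, 0, 0, rfl, rfl, rfl⟩)
  have h2 : Reach ((m, 0, 0, 0), St.q₁) ((m, 0, 0, 0), St.c₁) :=
    single (Or.inr (Or.inl ⟨m, 0, 0, 0, rfl, rfl, rfl, rfl⟩))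
  have h3 : Reach ((m, 0, 0, 0), St.c₁) ((0, 0, m, 0), St.c₁) := by
    have := c1_loop m 0 0 0 (k := m) (by omega)
    rw [show m - m = (0 : ℤ) by ring, show (0 : ℤ) + m = m by ring] at this
    exact this
  have h4 : Reach ((0, 0, m, 0), St.c₁) ((0, 0, m, 0), St.c₂) :=
    single (Or.inr (Or.inr (Or.inr (Or.inl ⟨0, 0, m, 0, rfl, rfl, rfl, rfl⟩))))
  have h5 : Reach ((0, 0, m, 0), St.c₂) ((m, m, 0, 0), St.c₂) := by
    have := c2_loop 0 0 m 0 (k := m) (by omega)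
    rw [show (0 : ℤ) + m = m by ring, show m - m = (0 : ℤ) by ring] at this
    exact this
  have h6 : Reach ((m, m, 0, 0), St.c₂) ((m, m, 0, 0), St.q₂) :=
    single (Or.inr (Or.inr (Or.inr (Or.inr (Or.inr (Or.inl ⟨m, m, 0, 0, rfl, rfl, rfl⟩))))))
  have h7 : Reach ((m, m, 0, 0), St.q₂) ((m, 1, 0, 0), St.q₂) := q2_to_one m m hm
  have h8 : Reach ((m, 1, 0, 0), St.q₂) ((m, 0, 0, 0), St.f) := by
    refine single (Or.inr (Or.inr (Or.inr (Or.inr (Or.inr (Or.inr (Or.inr (Or.inr (Or.inr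
      (Or.inr (Or.inr (Or.inr ⟨m, 1, 0, 0, rfl, rfl, ?_⟩))))))))))))
    simp only [Prod.mk.injEq, eq_self_iff_true, and_true, true_and]
    omega
  exact ((((((h1.trans h2).trans h3).trans h4).trans h5).trans h6).trans h7).trans h8

/-- The machine checks positivity of the first coordinate. -/
theorem posCheck_io :
    (∀ m m' : ℤ, Reach ((m, 0, 0, 0), St.s) ((m', 0, 0, 0), St.s) ↔ m = m') ∧
    (∀ m m' : ℤ, Reach ((m, 0, 0, 0), St.f) ((m', 0, 0, 0), St.f) ↔ m = m') ∧
    (∀ m m' : ℤ, Reach ((m, 0, 0, 0), St.s) ((m', 0, 0, 0), St.f) ↔ (m = m' ∧ 1 ≤ m)) := by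
  refine ⟨fun m m' => ⟨fun h => ?_, fun h => by subst h; exact Relation.ReflTransGen.refl⟩,
          fun m m' => ⟨fun h => ?_, fun h => by subst h; exact Relation.ReflTransGen.refl⟩,
          fun m m' => ⟨fun h => ?_, fun h => ?_⟩⟩
  · have := inS_reach m h (by simp [InS])
    simp only [InS] at this
    omega
  · have := inF_reach m h (by simp [InF])
    simp only [InF] at this
    omega
  · have := inS_reach m h (by simp [InS])
    simp only [InS] at this
    omega
  · obtain ⟨h1, h2⟩ := h
    subst h1
    exact path_pos m h2

end PosCheckMachine
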